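/- For every positive integer n, p(n) = Σ_{k≥1} (-1)^{k+1} ( p(n − k(3k−1)/2) + p(n − k(3k+1)/2) ), where p(m) = 0 for m < 0 and p(0) = 1, and the sum has only finitely many nonzero terms. -/

import Mathlib

noncomputable def partitionZ (m : ℤ) : ℤ :=
  if h : 0 ≤ m then (Fintype.card (Nat.Partition m.toNat) : ℤ) else 0

namespace EulerPent

open Finset

/-- pentagonal number `j(3j+1)/2` -/
def g (j : ℤ) : ℤ := j * (3 * j + 1) / 2

lemma two_g (j : ℤ) : 2 * g j = 3 * j ^ 2 + j := by
  have h : (2:ℤ) ∣ j * (3 * j + 1) := by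
    rcases Int.even_or_odd j with ⟨m, hm⟩ | ⟨m, hm⟩
    · exact ⟨m * (3 * j + 1), by rw [hm]; ring⟩
    · exact ⟨j * (3 * m + 2), by rw [hm]; ring⟩
  rw [g, Int.mul_ediv_cancel' h]; ring

lemma g_succ (j : ℤ) : g (j + 1) = g j + 3 * j + 2 := by
  have h1 := two_g (j+1); have h2 := two_g j; ring_nf at h1 h2 ⊢; linarith

lemma g_pred (j : ℤ) : g (j - 1) = g j - 3 * j + 1 := by
  have h1 := two_g (j-1); have h2 := two_g j; ring_nf at h1 h2 ⊢; linarith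

lemma g_zero : g 0 = 0 := by decide

lemma abs_le_of_g_le {n j : ℤ} (hn : 1 ≤ n) (h : g j ≤ n) : -n ≤ j ∧ j ≤ n := by
  have h2 := two_g j
  constructor <;> nlinarith [sq_nonneg j, sq_nonneg (j+1), sq_nonneg (j-1)]

/-- sign `(-1)^j` -/
def E (j : ℤ) : ℤ := (Int.negOnePow j : ℤ)

lemma E_succ (j : ℤ) : E (j + 1) = - E j := by
  simp [E, Int.negOnePow_succ]

lemma E_pred (j : ℤ) : E (j - 1) = - E j := by
  have := E_succ (j - 1); rw [sub_add_cancel] at this; rw [this]; ring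

lemma E_neg (j : ℤ) : E (-j) = E j := by simp [E, Int.negOnePow_neg]

lemma E_zero : E 0 = 1 := by simp [E, Int.negOnePow_zero]

lemma E_ne_zero (j : ℤ) : E j ≠ 0 := by
  simp [E]

/-- partitions of `m` as a finset of multisets -/
noncomputable def pf (m : ℤ) : Finset (Multiset ℕ) :=
  if h : 0 ≤ m then Finset.univ.image (fun p : Nat.Partition m.toNat => p.parts) else ∅

lemma card_pf (m : ℤ) : ((pf m).card : ℤ) = partitionZ m := by
  unfold pf partitionZ
  split
  · rw [Finset.card_image_of_injective _ (fun p q h => Nat.Partition.ext h), Finset.card_univ]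
  · simp

lemma mem_pf {m : ℤ} {μ : Multiset ℕ} :
    μ ∈ pf m ↔ 0 ≤ m ∧ (μ.sum : ℤ) = m ∧ ∀ i ∈ μ, i ≠ 0 := by
  unfold pf
  split
  · rename_i h
    simp only [Finset.mem_image, Finset.mem_univ, true_and]
    constructor
    · rintro ⟨p, rfl⟩
      refine ⟨h, ?_, fun i hi => (p.parts_pos hi).ne'⟩
      rw [p.parts_sum]; exact Int.toNat_of_nonneg h
    · rintro ⟨-, hs, hp⟩
      exact ⟨⟨μ, fun hi => Nat.pos_of_ne_zero (hp _ hi), by omega⟩, rfl⟩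
  · rename_i h
    simp only [Finset.notMem_empty, false_iff]
    rintro ⟨h0, -⟩; exact h h0

/-! multiset helper lemmas -/

lemma sup_mem_of_ne (μ : Multiset ℕ) (h : μ ≠ 0) : μ.sup ∈ μ := by
  induction μ using Multiset.induction_on with
  | empty => exact absurd rfl h
  | cons a s ih =>
    rw [Multiset.sup_cons]
    rcases eq_or_ne s 0 with rfl | hs
    · simp
    · rcases le_total a s.sup with hle | hle
      · rw [sup_eq_right.2 hle]; exact Multiset.mem_cons_of_mem (ih hs)
      · rw [sup_eq_left.2 hle]; exact Multiset.mem_cons_self a s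

lemma sum_filter_pos (s : Multiset ℕ) : (s.filter (0 < ·)).sum = s.sum := by
  induction s using Multiset.induction_on with
  | empty => simp
  | cons a s ih =>
    by_cases h : 0 < a
    · rw [Multiset.filter_cons_of_pos _ h, Multiset.sum_cons, Multiset.sum_cons, ih]
    · rw [Multiset.filter_cons_of_neg _ h, Multiset.sum_cons, ih]
      omega

lemma sum_map_pred (s : Multiset ℕ) (h : ∀ i ∈ s, i ≠ 0) :
    (s.map (· - 1)).sum + Multiset.card s = s.sum := by
  induction s using Multiset.induction_on with
  | empty => simp
  | cons a s ih =>
    have ha : a ≠ 0 := h a (Multiset.mem_cons_self a s)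
    rw [Multiset.map_cons, Multiset.sum_cons, Multiset.sum_cons, Multiset.card_cons]
    have := ih (fun i hi => h i (Multiset.mem_cons_of_mem hi))
    omega

/-- the Bressoud–Zeilberger involution -/
noncomputable def phi (x : ℤ × Multiset ℕ) : ℤ × Multiset ℕ :=
  if (x.2.sup : ℤ) ≤ (Multiset.card x.2 : ℤ) + 3 * x.1 then
    (x.1 - 1,
      Multiset.filter (0 < ·)
        (((Multiset.card x.2 : ℤ) + 3 * x.1 - 1).toNat ::ₘ x.2.map (· - 1)))
  else if x.2 = 0 then
    (x.1 + 1, Multiset.replicate (-3 * x.1 - 2).toNat 1)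
  else
    (x.1 + 1,
      Multiset.replicate ((x.2.sup : ℤ) - Multiset.card x.2 - 3 * x.1 - 1).toNat 1
        + (x.2.erase x.2.sup).map (· + 1))

lemma phi_fst (x : ℤ × Multiset ℕ) : (phi x).1 = x.1 - 1 ∨ (phi x).1 = x.1 + 1 := by
  unfold phi
  split
  · left; rfl
  · split
    · right; rfl
    · right; rfl

def Valid (n : ℤ) (x : ℤ × Multiset ℕ) : Prop :=
  (x.2.sum : ℤ) = n - g x.1 ∧ ∀ i ∈ x.2, i ≠ 0

end EulerPent

namespace EulerPent
open Finset

lemma sum_map_succ (s : Multiset ℕ) : (s.map (· + 1)).sum = s.sum + Multiset.card s := by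
  induction s using Multiset.induction_on with
  | empty => simp
  | cons a s ih =>
    rw [Multiset.map_cons, Multiset.sum_cons, Multiset.sum_cons, Multiset.card_cons, ih]
    omega

lemma phi_def (j : ℤ) (μ : Multiset ℕ) : phi (j, μ) =
    if (μ.sup : ℤ) ≤ (Multiset.card μ : ℤ) + 3 * j then
      (j - 1,
        Multiset.filter (0 < ·)
          (((Multiset.card μ : ℤ) + 3 * j - 1).toNat ::ₘ μ.map (· - 1)))
    else if μ = 0 then
      (j + 1, Multiset.replicate (-3 * j - 2).toNat 1)
    else
      (j + 1,
        Multiset.replicate ((μ.sup : ℤ) - Multiset.card μ - 3 * j - 1).toNat 1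
          + (μ.erase μ.sup).map (· + 1)) := rfl

lemma phi_good (n : ℤ) (hn : 1 ≤ n) (x : ℤ × Multiset ℕ) (hv : Valid n x) :
    Valid n (phi x) ∧ phi (phi x) = x := by
  obtain ⟨j, μ⟩ := x
  obtain ⟨hsum, hpos⟩ := hv
  dsimp only at hsum hpos
  by_cases hc : (μ.sup : ℤ) ≤ (Multiset.card μ : ℤ) + 3 * j
  · by_cases h2 : 2 ≤ (Multiset.card μ : ℤ) + 3 * j
    · -- Case I : generic "case 1" branch
      set t := Multiset.card μ with ht
      set a := μ.sup with ha
      set B := ((t : ℤ) + 3 * j - 1).toNat with hBdef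
      have hB : (B : ℤ) = (t : ℤ) + 3 * j - 1 := by omega
      have hB1 : 1 ≤ B := by omega
      set M := (Multiset.filter (2 ≤ ·) μ).map (· - 1) with hM
      have hinner : Multiset.filter (0 < ·) (B ::ₘ μ.map (· - 1)) = B ::ₘ M := by
        rw [Multiset.filter_cons_of_pos _ (by omega : 0 < B), Multiset.filter_map, hM]
        congr 1
        apply congrArg
        apply Multiset.filter_congr
        intro y _
        show 0 < y - 1 ↔ 2 ≤ y
        omega
      have e1 : phi (j, μ) = (j - 1, B ::ₘ M) := by
        rw [phi_def, if_pos hc, hinner]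
      -- sum of the new multiset
      have hsum1 : ((B ::ₘ M).sum : ℤ) = n - g (j - 1) := by
        have h3 : (B ::ₘ M).sum = B + (μ.map (· - 1)).sum := by
          rw [← hinner, sum_filter_pos, Multiset.sum_cons]
        have h4 := sum_map_pred μ hpos
        have h5 := g_pred j
        omega
      have hpos1 : ∀ i ∈ B ::ₘ M, i ≠ 0 := by
        intro i hi
        rcases Multiset.mem_cons.1 hi with rfl | hi
        · omega
        · rw [hM] at hi
          obtain ⟨y, hy, rfl⟩ := Multiset.mem_map.1 hi
          have := Multiset.of_mem_filter hy
          omega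
      have hvalid : Valid n (phi (j, μ)) := by
        rw [e1]; exact ⟨hsum1, hpos1⟩
      refine ⟨hvalid, ?_⟩
      rw [e1]
      -- now compute phi (j-1, B ::ₘ M)
      set f2 := Multiset.card (Multiset.filter (2 ≤ ·) μ) with hf2
      have hf2t : f2 ≤ t := Multiset.card_le_card (Multiset.filter_le _ _)
      have hcard : Multiset.card (B ::ₘ M) = f2 + 1 := by
        rw [Multiset.card_cons, hM, Multiset.card_map]
      have hsupBM : (B ::ₘ M).sup = B := by
        apply le_antisymm
        · rw [Multiset.sup_le]
          intro b hb
          rcases Multiset.mem_cons.1 hb with rfl | hb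
          · exact le_rfl
          · rw [hM] at hb
            obtain ⟨y, hy, rfl⟩ := Multiset.mem_map.1 hb
            have h6 : y ∈ μ := Multiset.mem_of_le (Multiset.filter_le _ _) hy
            have h7 : y ≤ a := Multiset.le_sup h6
            omega
        · exact Multiset.le_sup (Multiset.mem_cons_self _ _)
      have hcond' : ¬ (((B ::ₘ M).sup : ℤ) ≤ (Multiset.card (B ::ₘ M) : ℤ) + 3 * (j - 1)) := by
        rw [hsupBM, hcard]
        push_cast
        omega
      rw [phi_def, if_neg hcond', if_neg (Multiset.cons_ne_zero)]
      have hj : j - 1 + 1 = j := by ring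
      rw [hsupBM, hcard]
      set c' := (((B ::ₘ M).sup : ℤ) - (Multiset.card (B ::ₘ M)) - 3 * (j - 1) - 1).toNat with hc'def
      have hc' : ((B : ℤ) - ((f2 + 1 : ℕ) : ℤ) - 3 * (j - 1) - 1).toNat = t - f2 := by
        push_cast; omega
      rw [hc']
      have herase : (B ::ₘ M).erase B = M := Multiset.erase_cons_head _ _
      rw [herase]
      have hmapM : M.map (· + 1) = Multiset.filter (2 ≤ ·) μ := by
        rw [hM, Multiset.map_map]
        rw [Multiset.map_congr rfl (fun y hy => ?_), Multiset.map_id]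
        have := Multiset.of_mem_filter hy
        show y - 1 + 1 = id y
        simp only [id]
        omega
      rw [hmapM]
      have hrep : Multiset.replicate (t - f2) 1 = Multiset.filter (fun i => ¬ 2 ≤ i) μ := by
        symm
        rw [Multiset.eq_replicate]
        constructor
        · have := congrArg Multiset.card (Multiset.filter_add_not (2 ≤ ·) μ)
          rw [Multiset.card_add] at this
          omega
        · intro b hb
          have h8 := Multiset.of_mem_filter hb
          have h9 := hpos b (Multiset.mem_of_le (Multiset.filter_le _ _) hb)
          omega
      have hfin : Multiset.filter (fun i => (2:ℕ) ≤ i) μ + Multiset.filter (fun i => ¬ (2:ℕ) ≤ i) μ = μ :=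
        Multiset.filter_add_not _ μ
      rw [hj, hrep, add_comm, hfin]
    · -- Case II : all parts equal to 1, t + 3j = 1
      push_neg at h2
      have hμ : μ ≠ 0 := by
        rintro rfl
        simp only [Multiset.sum_zero, Nat.cast_zero] at hsum
        simp only [Multiset.sup_zero, Multiset.card_zero, Nat.cast_zero, zero_add,
          Nat.bot_eq_zero] at hc h2
        have hj0 : j = 0 := by omega
        rw [hj0, g_zero] at hsum
        omega
      set t := Multiset.card μ with ht
      set a := μ.sup with ha
      have hamem : a ∈ μ := sup_mem_of_ne μ hμ
      have ha1 : 1 ≤ a := Nat.pos_of_ne_zero (hpos a hamem)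
      have ht1 : 1 ≤ t := by
        rw [ht]; exact Multiset.card_pos.2 hμ
      have hta : (t : ℤ) + 3 * j = 1 ∧ a = 1 := by
        constructor <;> omega
      have hμrep : μ = Multiset.replicate t 1 := by
        rw [Multiset.eq_replicate]
        refine ⟨rfl, fun b hb => ?_⟩
        have h5 : b ≤ a := Multiset.le_sup hb
        have h6 := hpos b hb
        omega
      have hsumt : (t : ℤ) = n - g j := by
        rw [hμrep] at hsum
        rw [Multiset.sum_replicate, smul_eq_mul, mul_one] at hsum
        exact_mod_cast hsum
      have e1 : phi (j, μ) = (j - 1, 0) := by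
        rw [phi_def, if_pos hc]
        congr 1
        rw [Multiset.filter_eq_nil]
        intro b hb
        rcases Multiset.mem_cons.1 hb with rfl | hb
        · omega
        · obtain ⟨y, hy, rfl⟩ := Multiset.mem_map.1 hb
          rw [hμrep] at hy
          have := Multiset.eq_of_mem_replicate hy
          omega
      have hs0 : (((0 : Multiset ℕ)).sum : ℤ) = n - g (j - 1) := by
        have h5 := g_pred j
        simp only [Multiset.sum_zero, Nat.cast_zero]
        omega
      have hvalid : Valid n (phi (j, μ)) := by
        rw [e1]
        exact ⟨hs0, fun i hi => absurd hi (Multiset.notMem_zero i)⟩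
      refine ⟨hvalid, ?_⟩
      rw [e1, phi_def]
      rw [if_neg (by simp only [Multiset.sup_zero, Multiset.card_zero, Nat.cast_zero, zero_add]; omega),
        if_pos rfl]
      have : (-3 * (j - 1) - 2).toNat = t := by omega
      rw [this, sub_add_cancel, ← hμrep]
  · rcases eq_or_ne μ 0 with rfl | hμ
    · -- Case III : empty partition, j ≤ -1
      simp only [Multiset.sup_zero, Multiset.card_zero, Nat.cast_zero, zero_add,
        Nat.bot_eq_zero] at hc
      simp only [Multiset.sum_zero, Nat.cast_zero] at hsum
      have hj : j ≤ -1 := by omega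
      set r := (-3 * j - 2).toNat with hrdef
      have hr : (r : ℤ) = -3 * j - 2 := by omega
      have hr1 : 1 ≤ r := by omega
      have e1 : phi (j, (0 : Multiset ℕ)) = (j + 1, Multiset.replicate r 1) := by
        rw [phi_def, if_neg (by simpa using hc), if_pos rfl]
      have hvs : (((Multiset.replicate r (1:ℕ)).sum : ℕ) : ℤ) = n - g (j + 1) := by
        have h5 := g_succ j
        have h6 : (Multiset.replicate r (1:ℕ)).sum = r := by
          rw [Multiset.sum_replicate, smul_eq_mul, mul_one]
        rw [h6]
        omega
      have hvalid : Valid n (phi (j, (0 : Multiset ℕ))) := by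
        rw [e1]
        exact ⟨hvs, fun i hi => by have := Multiset.eq_of_mem_replicate hi; omega⟩
      refine ⟨hvalid, ?_⟩
      rw [e1]
      have hsup : (Multiset.replicate r (1:ℕ)).sup = 1 := by
        apply le_antisymm
        · rw [Multiset.sup_le]
          intro b hb
          have := Multiset.eq_of_mem_replicate hb
          omega
        · have h1m : (1 : ℕ) ∈ Multiset.replicate r 1 :=
            Multiset.mem_replicate.2 ⟨by omega, rfl⟩
          exact Multiset.le_sup h1m
      have hcond : (((Multiset.replicate r (1:ℕ)).sup : ℕ) : ℤ) ≤
          (Multiset.card (Multiset.replicate r (1:ℕ)) : ℤ) + 3 * (j + 1) := by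
        rw [hsup, Multiset.card_replicate]
        omega
      rw [phi_def, if_pos hcond]
      congr 1
      · ring
      rw [Multiset.card_replicate]
      have hB0 : ((r : ℤ) + 3 * (j + 1) - 1).toNat = 0 := by omega
      rw [hB0, Multiset.map_replicate]
      rw [Multiset.filter_eq_nil]
      intro b hb
      rcases Multiset.mem_cons.1 hb with rfl | hb
      · omega
      · have := Multiset.eq_of_mem_replicate hb
        omega
    · -- Case IV : generic "case 2" branch
      set t := Multiset.card μ with ht
      set a := μ.sup with ha
      push_neg at hc
      have hamem : a ∈ μ := sup_mem_of_ne μ hμ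
      have ha1 : 1 ≤ a := Nat.pos_of_ne_zero (hpos a hamem)
      have ht1 : 1 ≤ t := by
        rw [ht]; exact Multiset.card_pos.2 hμ
      set c := ((a : ℤ) - t - 3 * j - 1).toNat with hcdef
      have hcz : (c : ℤ) = (a : ℤ) - t - 3 * j - 1 := by omega
      set ν := Multiset.replicate c 1 + (μ.erase a).map (· + 1) with hν
      have e1 : phi (j, μ) = (j + 1, ν) := by
        rw [phi_def, if_neg (by omega), if_neg hμ]
      have hcardν : Multiset.card ν = c + (t - 1) := by
        rw [hν, Multiset.card_add, Multiset.card_replicate, Multiset.card_map,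
          Multiset.card_erase_of_mem hamem]
        rfl
      have hsumerase : a + (μ.erase a).sum = μ.sum := by
        conv_rhs => rw [← Multiset.cons_erase hamem]
        rw [Multiset.sum_cons]
      have hsν : ν.sum = c + ((μ.erase a).sum + (t - 1)) := by
        rw [hν, Multiset.sum_add, Multiset.sum_replicate, smul_eq_mul, mul_one, sum_map_succ,
          Multiset.card_erase_of_mem hamem, Nat.pred_eq_sub_one]
      have hsumν : (ν.sum : ℤ) = n - g (j + 1) := by
        have h5 := g_succ j
        omega
      have hposν : ∀ i ∈ ν, i ≠ 0 := by
        intro i hi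
        rw [hν, Multiset.mem_add] at hi
        rcases hi with hi | hi
        · have := Multiset.eq_of_mem_replicate hi
          omega
        · obtain ⟨y, hy, rfl⟩ := Multiset.mem_map.1 hi
          omega
      have hvalid : Valid n (phi (j, μ)) := by
        rw [e1]; exact ⟨hsumν, hposν⟩
      refine ⟨hvalid, ?_⟩
      rw [e1]
      have hsupν : (ν.sup : ℤ) ≤ (a : ℤ) + 1 := by
        have h6 : ν.sup ≤ a + 1 := by
          rw [Multiset.sup_le]
          intro b hb
          rw [hν, Multiset.mem_add] at hb
          rcases hb with hb | hb
          · have := Multiset.eq_of_mem_replicate hb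
            omega
          · obtain ⟨y, hy, rfl⟩ := Multiset.mem_map.1 hb
            have h7 : y ∈ μ := Multiset.mem_of_mem_erase hy
            have h8 : y ≤ a := Multiset.le_sup h7
            omega
        exact_mod_cast h6
      have hcond : ((ν.sup : ℤ)) ≤ (Multiset.card ν : ℤ) + 3 * (j + 1) := by
        have h9 : ((Multiset.card ν : ℤ)) = (a : ℤ) - 3 * j - 2 := by
          rw [hcardν]; push_cast; omega
        omega
      rw [phi_def, if_pos hcond]
      have h9 : ((Multiset.card ν : ℤ)) = (a : ℤ) - 3 * j - 2 := by
        rw [hcardν]; push_cast; omega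
      have hB : ((Multiset.card ν : ℤ) + 3 * (j + 1) - 1).toNat = a := by omega
      rw [hB]
      have hmapν : ν.map (· - 1) = Multiset.replicate c 0 + μ.erase a := by
        rw [hν, Multiset.map_add, Multiset.map_replicate, Multiset.map_map]
        congr 1
        rw [Multiset.map_congr rfl (fun y hy => ?_), Multiset.map_id]
        show y + 1 - 1 = id y
        simp only [id]
        omega
      rw [hmapν]
      rw [Multiset.filter_cons_of_pos _ (by omega : 0 < a), Multiset.filter_add]
      rw [Multiset.filter_eq_nil.2 (fun b hb => by
        have := Multiset.eq_of_mem_replicate hb; omega)]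
      rw [Multiset.filter_eq_self.2 (fun b hb => by
        have h10 : b ∈ μ := Multiset.mem_of_mem_erase hb
        have := hpos b h10
        omega)]
      rw [zero_add, Multiset.cons_erase hamem]
      congr 1
      ring

end EulerPent

namespace EulerPent
open Finset

lemma valid_range {n : ℤ} (hn : 1 ≤ n) {x : ℤ × Multiset ℕ} (hv : Valid n x) :
    -n ≤ x.1 ∧ x.1 ≤ n := by
  have hs := hv.1
  have h0 : (0:ℤ) ≤ (x.2.sum : ℤ) := Int.natCast_nonneg _
  exact abs_le_of_g_le hn (by omega)

noncomputable def S (n : ℤ) : Finset (ℤ × Multiset ℕ) :=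
  (Finset.Icc (-n) n).biUnion fun j => (pf (n - g j)).image fun μ => (j, μ)

lemma mem_S {n : ℤ} (hn : 1 ≤ n) {x : ℤ × Multiset ℕ} : x ∈ S n ↔ Valid n x := by
  obtain ⟨j, μ⟩ := x
  simp only [S, Finset.mem_biUnion, Finset.mem_image, Finset.mem_Icc]
  constructor
  · rintro ⟨i, hi, ν, hν, h⟩
    rw [Prod.mk.injEq] at h
    obtain ⟨rfl, rfl⟩ := h
    rw [mem_pf] at hν
    exact ⟨hν.2.1, hν.2.2⟩
  · intro hv
    have hr := valid_range hn hv
    refine ⟨j, ⟨hr.1, hr.2⟩, μ, ?_, rfl⟩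
    rw [mem_pf]
    have hs := hv.1
    dsimp only at hs
    have h0 : (0:ℤ) ≤ (μ.sum : ℤ) := Int.natCast_nonneg _
    exact ⟨by omega, hv.1, hv.2⟩

lemma sum_S (n : ℤ) : ∑ x ∈ S n, E x.1 = ∑ j ∈ Finset.Icc (-n) n, E j * partitionZ (n - g j) := by
  rw [S, Finset.sum_biUnion]
  · apply Finset.sum_congr rfl
    intro j _
    rw [Finset.sum_image (fun x _ y _ h => congrArg Prod.snd h)]
    have hc : ∀ μ ∈ pf (n - g j), E (j, μ).1 = E j := fun _ _ => rfl
    rw [Finset.sum_congr rfl hc, Finset.sum_const, nsmul_eq_mul, card_pf]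
    exact mul_comm _ _
  · intro a _ b _ hab
    refine Finset.disjoint_left.2 ?_
    rintro x hxa hxb
    simp only [Finset.mem_image] at hxa hxb
    obtain ⟨μ1, _, rfl⟩ := hxa
    obtain ⟨μ2, _, h2⟩ := hxb
    exact hab (congrArg Prod.fst h2).symm

lemma key (n : ℤ) (hn : 1 ≤ n) :
    ∑ j ∈ Finset.Icc (-n) n, E j * partitionZ (n - g j) = 0 := by
  rw [← sum_S]
  apply Finset.sum_involution (fun x _ => phi x)
  · intro x _
    rcases phi_fst x with h | h <;> rw [h]
    · rw [E_pred]; ring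
    · rw [E_succ]; ring
  · intro x _ _ heq
    rcases phi_fst x with h | h <;>
      [skip; skip] <;>
      · have := congrArg Prod.fst heq
        omega
  · intro x hx
    exact (mem_S hn).2 ((phi_good n hn x ((mem_S hn).1 hx)).1)
  · intro x hx
    exact (phi_good n hn x ((mem_S hn).1 hx)).2

end EulerPent

theorem euler_pentagonal_recursion (n : ℤ) (hn : 1 ≤ n) :
    partitionZ n =
      ∑ k ∈ Finset.Icc (1 : ℤ) n,
        (-1) ^ (k.toNat + 1) *
          (partitionZ (n - k * (3 * k - 1) / 2) + partitionZ (n - k * (3 * k + 1) / 2)) ∧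
    ∀ k : ℤ, n < k →
      (-1 : ℤ) ^ (k.toNat + 1) *
          (partitionZ (n - k * (3 * k - 1) / 2) + partitionZ (n - k * (3 * k + 1) / 2)) = 0 := by
  constructor
  · have key := EulerPent.key n hn
    set f : ℤ → ℤ := fun j => EulerPent.E j * partitionZ (n - EulerPent.g j) with hf
    have hd1 : Disjoint (Finset.Icc (-n) (-1)) (Finset.Icc 0 n) := by
      rw [Finset.disjoint_left]
      intro x hx hx'
      simp only [Finset.mem_Icc] at hx hx'
      omega
    have hu1 : Finset.Icc (-n) n = Finset.Icc (-n) (-1) ∪ Finset.Icc 0 n := by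
      ext x; simp only [Finset.mem_Icc, Finset.mem_union]; omega
    have hu2 : Finset.Icc (0:ℤ) n = insert 0 (Finset.Icc 1 n) := by
      ext x; simp only [Finset.mem_Icc, Finset.mem_insert]; omega
    have himg : Finset.Icc (-n) (-1) = (Finset.Icc (1:ℤ) n).image Neg.neg := by
      ext x
      simp only [Finset.mem_Icc, Finset.mem_image]
      constructor
      · intro h; exact ⟨-x, by omega, by omega⟩
      · rintro ⟨y, hy, rfl⟩; omega
    have h0mem : (0:ℤ) ∉ Finset.Icc (1:ℤ) n := by
      simp only [Finset.mem_Icc]; omega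
    rw [hu1, Finset.sum_union hd1, hu2, Finset.sum_insert h0mem, himg,
      Finset.sum_image (fun x _ y _ h => by omega)] at key
    have hf0 : f 0 = partitionZ n := by
      rw [hf]
      simp only [EulerPent.E_zero, EulerPent.g_zero, sub_zero, one_mul]
    have hterm : ∀ k ∈ Finset.Icc (1:ℤ) n,
        (-1 : ℤ) ^ (k.toNat + 1) *
          (partitionZ (n - k * (3 * k - 1) / 2) + partitionZ (n - k * (3 * k + 1) / 2))
        = -(f (-k) + f k) := by
      intro k hk
      simp only [Finset.mem_Icc] at hk
      have hEk : EulerPent.E k = (-1 : ℤ) ^ k.toNat := by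
        rw [EulerPent.E]
        conv_lhs => rw [show k = ((k.toNat : ℕ) : ℤ) from (Int.toNat_of_nonneg (by omega)).symm]
        exact_mod_cast Int.coe_negOnePow_natCast k.toNat
      have hgneg : EulerPent.g (-k) = k * (3 * k - 1) / 2 := by
        unfold EulerPent.g
        congr 1
        ring
      have hgk : EulerPent.g k = k * (3 * k + 1) / 2 := rfl
      rw [hf]
      simp only
      rw [EulerPent.E_neg, hgneg, hgk, hEk, pow_succ]
      ring
    rw [Finset.sum_congr rfl hterm]
    have hs : (∑ k ∈ Finset.Icc (1:ℤ) n, -(f (-k) + f k))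
        = -((∑ k ∈ Finset.Icc (1:ℤ) n, f (-k)) + (∑ k ∈ Finset.Icc (1:ℤ) n, f k)) := by
      rw [← Finset.sum_add_distrib, ← Finset.sum_neg_distrib]
    rw [hs]
    have keyf : (∑ k ∈ Finset.Icc (1:ℤ) n, f (-k)) + (f 0 + ∑ k ∈ Finset.Icc (1:ℤ) n, f k) = 0 := key
    linarith [keyf, hf0]
  · intro k hk
    have hpz : ∀ m : ℤ, m < 0 → partitionZ m = 0 := by
      intro m hm
      unfold partitionZ
      rw [dif_neg (by omega)]
    have e1 : k * (3 * k - 1) / 2 = EulerPent.g (-k) := by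
      unfold EulerPent.g
      congr 1
      ring
    have e2 : k * (3 * k + 1) / 2 = EulerPent.g k := rfl
    have h1 := EulerPent.two_g (-k)
    have h2 := EulerPent.two_g k
    have hlt1 : n - k * (3 * k - 1) / 2 < 0 := by
      rw [e1]
      nlinarith [sq_nonneg (k - 1), sq_nonneg k]
    have hlt2 : n - k * (3 * k + 1) / 2 < 0 := by
      rw [e2]
      nlinarith [sq_nonneg (k - 1), sq_nonneg k]
    rw [hpz _ hlt1, hpz _ hlt2]
    ring
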